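/- For every positive integers m and r there exists a positive integer n₀ such that for every n ≥ n₀ and every r-coloring of the nonempty subsets of {0,...,n-1}, there exist pairwise disjoint nonempty sets F₀,...,F_{m-1} ⊆ {0,...,n-1} with min F₀ < min F₁ < ... < min F_{m-1} such that all nonempty unions ∪_{i∈U} Fᵢ (∅ ≠ U ⊆ {0,...,m-1}) receive the same color. -/

import Mathlib

namespace FolkmanAux

open Finset

/-- The set of binary digits (bit positions) of a natural number. -/
def bits (x : ℕ) : Finset ℕ := (Finset.range x).filter (fun i => x.testBit i)

lemma mem_bits {x i : ℕ} : i ∈ bits x ↔ x.testBit i = true := by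
  simp only [bits, mem_filter, mem_range]
  refine ⟨fun h => h.2, fun h => ⟨?_, h⟩⟩
  calc i < 2 ^ i := Nat.lt_two_pow_self
    _ ≤ x := Nat.ge_two_pow_of_testBit h

lemma bits_zero : bits 0 = ∅ := by simp [bits]

lemma bits_nonempty {x : ℕ} (hx : x ≠ 0) : (bits x).Nonempty := by
  obtain ⟨i, h⟩ := Nat.exists_testBit_of_ne_zero hx
  exact ⟨i, mem_bits.2 h⟩

lemma bits_lt {x L : ℕ} (h : x < 2 ^ L) {i : ℕ} (hi : i ∈ bits x) : i < L := by
  by_contra hc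
  have h1 : (2:ℕ) ^ L ≤ 2 ^ i := Nat.pow_le_pow_right (by norm_num) (Nat.le_of_not_lt hc)
  have h2 : (2:ℕ) ^ i ≤ x := Nat.ge_two_pow_of_testBit (mem_bits.1 hi)
  omega

lemma bits_ge {x L : ℕ} (h : 2 ^ L ∣ x) {i : ℕ} (hi : i ∈ bits x) : L ≤ i := by
  obtain ⟨q, rfl⟩ := h
  have hb := mem_bits.1 hi
  rw [Nat.testBit_two_pow_mul] at hb
  simp only [Bool.and_eq_true, decide_eq_true_eq] at hb
  exact hb.1

lemma bits_add {L x y : ℕ} (hx : 2 ^ L ∣ x) (hy : y < 2 ^ L) :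
    bits (x + y) = bits x ∪ bits y := by
  obtain ⟨q, rfl⟩ := hx
  ext j
  simp only [mem_bits, mem_union]
  rw [Nat.testBit_two_pow_mul_add q hy j, Nat.testBit_two_pow_mul]
  by_cases hj : j < L
  · have : ¬ (j ≥ L) := by omega
    simp [hj, this]
  · have hyj : y.testBit j = false :=
      Nat.testBit_lt_two_pow (lt_of_lt_of_le hy
        (Nat.pow_le_pow_right (by norm_num) (Nat.le_of_not_lt hj)))
    have : j ≥ L := by omega
    simp [hj, this, hyj]

lemma exists_div (A : ℕ → ℕ) (k L : ℕ) :
    ∃ s : Finset ℕ, s.Nonempty ∧ (∀ i ∈ s, k ≤ i) ∧ 2 ^ L ∣ ∑ i ∈ s, A i := by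
  have key : ∀ x y : ℕ, x < y →
      (∑ i ∈ Finset.Ico k (k + x), A i) % 2 ^ L = (∑ i ∈ Finset.Ico k (k + y), A i) % 2 ^ L →
      ∃ s : Finset ℕ, s.Nonempty ∧ (∀ i ∈ s, k ≤ i) ∧ 2 ^ L ∣ ∑ i ∈ s, A i := by
    intro x y hxy hmod
    refine ⟨Finset.Ico (k + x) (k + y), Finset.nonempty_Ico.2 (by omega), fun i hi => ?_, ?_⟩
    · have := (Finset.mem_Ico.1 hi).1; omega
    · have hsum : (∑ i ∈ Finset.Ico k (k + x), A i) + ∑ i ∈ Finset.Ico (k + x) (k + y), A i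
          = ∑ i ∈ Finset.Ico k (k + y), A i :=
        Finset.sum_Ico_consecutive A (by omega) (by omega)
      have hdvd := (Nat.modEq_iff_dvd' (by omega :
        (∑ i ∈ Finset.Ico k (k + x), A i) ≤ ∑ i ∈ Finset.Ico k (k + y), A i)).1 hmod
      have heq : (∑ i ∈ Finset.Ico k (k + y), A i) - (∑ i ∈ Finset.Ico k (k + x), A i)
          = ∑ i ∈ Finset.Ico (k + x) (k + y), A i := by omega
      rwa [heq] at hdvd
  obtain ⟨x, hx, y, hy, hne, heq⟩ :=
    Finset.exists_ne_map_eq_of_card_lt_of_maps_to (s := Finset.range (2 ^ L + 1))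
      (t := Finset.range (2 ^ L)) (by simp)
      (fun t _ => Finset.mem_range.2 (Nat.mod_lt _ (Nat.two_pow_pos L)))
  rcases lt_or_gt_of_ne hne with h | h
  · exact key x y h heq
  · exact key y x h heq.symm

/-- State of the recursive construction: (next available index, running total). -/
noncomputable def stt (A : ℕ → ℕ) : ℕ → ℕ × ℕ
  | 0 => (0, 0)
  | j + 1 =>
      ((exists_div A (stt A j).1 ((stt A j).2 + j + 1)).choose.sup id + 1,
        (stt A j).2 + ∑ i ∈ (exists_div A (stt A j).1 ((stt A j).2 + j + 1)).choose, A i)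

noncomputable def sets (A : ℕ → ℕ) (j : ℕ) : Finset ℕ :=
  (exists_div A (stt A j).1 ((stt A j).2 + j + 1)).choose

noncomputable def X (A : ℕ → ℕ) (j : ℕ) : ℕ := ∑ i ∈ sets A j, A i

noncomputable def Lf (A : ℕ → ℕ) (j : ℕ) : ℕ := (stt A j).2 + j + 1

lemma sets_spec (A : ℕ → ℕ) (j : ℕ) :
    (sets A j).Nonempty ∧ (∀ i ∈ sets A j, (stt A j).1 ≤ i) ∧ 2 ^ Lf A j ∣ X A j :=
  (exists_div A (stt A j).1 ((stt A j).2 + j + 1)).choose_spec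

lemma stt_succ (A : ℕ → ℕ) (j : ℕ) :
    stt A (j + 1) = ((sets A j).sup id + 1, (stt A j).2 + X A j) := rfl

lemma T_eq (A : ℕ → ℕ) : ∀ j, (stt A j).2 = ∑ j' ∈ Finset.range j, X A j'
  | 0 => rfl
  | j + 1 => by rw [stt_succ, Finset.sum_range_succ, ← T_eq A j]

lemma K_mono (A : ℕ → ℕ) : Monotone fun j => (stt A j).1 := by
  apply monotone_nat_of_le_succ
  intro j
  obtain ⟨e, he⟩ := (sets_spec A j).1
  have h1 : (stt A j).1 ≤ e := (sets_spec A j).2.1 e he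
  have h2 : e ≤ (sets A j).sup id := Finset.le_sup (f := id) he
  rw [stt_succ]
  simp only
  omega

lemma sets_ordered (A : ℕ → ℕ) {p q : ℕ} (h : p < q) :
    ∀ a ∈ sets A p, ∀ b ∈ sets A q, a < b := by
  intro a ha b hb
  have h1 : a ≤ (sets A p).sup id := Finset.le_sup (f := id) ha
  have h2 : (stt A (p + 1)).1 ≤ (stt A q).1 := K_mono A h
  have h3 : (stt A q).1 ≤ b := (sets_spec A q).2.1 b hb
  rw [stt_succ] at h2
  simp only at h2
  omega

lemma T_lt (A : ℕ → ℕ) (j : ℕ) : (stt A j).2 < 2 ^ Lf A j := by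
  have h1 : (stt A j).2 < 2 ^ (stt A j).2 := Nat.lt_two_pow_self
  have h2 : (2:ℕ) ^ (stt A j).2 ≤ 2 ^ Lf A j :=
    Nat.pow_le_pow_right (by norm_num) (by unfold Lf; omega)
  omega

lemma X_pos (A : ℕ → ℕ) (hA : ∀ i, 0 < A i) (j : ℕ) : 0 < X A j :=
  Finset.sum_pos (fun i _ => hA i) (sets_spec A j).1

lemma Lf_mono (A : ℕ → ℕ) : Monotone (Lf A) := by
  apply monotone_nat_of_le_succ
  intro j
  unfold Lf
  rw [stt_succ]
  simp only
  omega

lemma X_lt (A : ℕ → ℕ) (j : ℕ) : X A j < 2 ^ Lf A (j + 1) := by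
  have h1 := T_lt A (j + 1)
  rw [stt_succ] at h1
  simp only at h1
  omega

lemma bits_X_lt (A : ℕ → ℕ) {j i : ℕ} (hi : i ∈ bits (X A j)) : i < Lf A (j + 1) :=
  bits_lt (X_lt A j) hi

lemma bits_X_ge (A : ℕ → ℕ) {j i : ℕ} (hi : i ∈ bits (X A j)) : Lf A j ≤ i :=
  bits_ge (sets_spec A j).2.2 hi

lemma bits_sum (A : ℕ → ℕ) (V : Finset ℕ) :
    bits (∑ j ∈ V, X A j) = V.biUnion (fun j => bits (X A j)) := by
  induction V using Finset.induction_on_max with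
  | empty => simp [bits_zero]
  | insert a s hs ih =>
      have hnm : a ∉ s := fun h => lt_irrefl a (hs a h)
      have hsub : s ⊆ Finset.range a := fun x hx => Finset.mem_range.2 (hs x hx)
      have hbound : (∑ j ∈ s, X A j) ≤ (stt A a).2 := by
        rw [T_eq]
        exact Finset.sum_le_sum_of_subset hsub
      have hlt : (∑ j ∈ s, X A j) < 2 ^ Lf A a := lt_of_le_of_lt hbound (T_lt A a)
      rw [Finset.sum_insert hnm, Finset.biUnion_insert,
        bits_add (sets_spec A a).2.2 hlt, ih]

/-- Infinite Folkman theorem in the finite-unions form. -/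
theorem folkman_inf (m r : ℕ) (c : Finset ℕ → Fin r) :
    ∃ F : Fin m → Finset ℕ,
      (∀ i, (F i).Nonempty) ∧
      (∀ i j, i ≠ j → Disjoint (F i) (F j)) ∧
      (∀ i j : Fin m, i < j → (F i).min < (F j).min) ∧
      ∀ U U' : Finset (Fin m), U.Nonempty → U'.Nonempty →
        c (U.biUnion F) = c (U'.biUnion F) := by
  classical
  have pos_FS : ∀ (b : Stream' ℕ) (x : ℕ), x ∈ Hindman.FS b → (∀ i, 0 < b.get i) → 0 < x := by
    intro b x hx
    induction hx with
    | head' a => intro h; exact h 0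
    | tail' a y hy ih => intro h; exact ih fun i => by simpa using h (i + 1)
    | cons' a y hy ih =>
        intro h
        have h0 := h 0
        have : a.get 0 = a.head := rfl
        rw [this] at h0
        omega
  obtain ⟨cl, hclmem, b, hb⟩ := Hindman.FS_partition_regular (Stream'.const 1)
    (Set.range fun v : Fin r => {x : ℕ | 0 < x ∧ c (bits x) = v}) (Set.finite_range _)
    (fun x hx => ⟨_, Set.mem_range_self (c (bits x)),
      ⟨pos_FS _ x hx (fun i => by rw [Stream'.get_const]; exact Nat.one_pos), rfl⟩⟩)
  obtain ⟨v, rfl⟩ := hclmem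
  set A : ℕ → ℕ := fun i => b.get i with hAdef
  have hA : ∀ i, 0 < A i := fun i => (hb (Hindman.FS.singleton b i)).1
  have hcolor : ∀ V : Finset ℕ, V.Nonempty → c (bits (∑ i ∈ V, A i)) = v := by
    intro V hV
    exact (hb (Hindman.FS.finset_sum b V hV)).2
  refine ⟨fun i => bits (X A (i : ℕ)), ?_, ?_, ?_, ?_⟩
  · intro i
    exact bits_nonempty (Nat.pos_iff_ne_zero.1 (X_pos A hA _))
  · have key : ∀ p q : ℕ, p < q → Disjoint (bits (X A p)) (bits (X A q)) := by
      intro p q hpq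
      rw [Finset.disjoint_left]
      intro a ha ha'
      have h1 : a < Lf A (p + 1) := bits_X_lt A ha
      have h2 : Lf A q ≤ a := bits_X_ge A ha'
      have h3 : Lf A (p + 1) ≤ Lf A q := Lf_mono A hpq
      omega
    intro i j hij
    rcases Nat.lt_or_ge (i : ℕ) (j : ℕ) with h | h
    · exact key _ _ h
    · have h' : (j : ℕ) < (i : ℕ) := by
        rcases Nat.lt_or_ge (j : ℕ) (i : ℕ) with h' | h'
        · exact h'
        · exact absurd (Fin.ext (by omega : (i : ℕ) = (j : ℕ))) hij
      exact (key _ _ h').symm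
  · intro i j hij
    have hnei : (bits (X A (i : ℕ))).Nonempty := bits_nonempty (Nat.pos_iff_ne_zero.1 (X_pos A hA _))
    have hnej : (bits (X A (j : ℕ))).Nonempty := bits_nonempty (Nat.pos_iff_ne_zero.1 (X_pos A hA _))
    rw [← Finset.coe_min' hnei, ← Finset.coe_min' hnej]
    have h1 : (bits (X A (i : ℕ))).min' hnei < Lf A ((i : ℕ) + 1) :=
      bits_X_lt A (Finset.min'_mem _ _)
    have h2 : Lf A ((i : ℕ) + 1) ≤ Lf A (j : ℕ) := Lf_mono A (by exact hij)
    have h3 : Lf A (j : ℕ) ≤ (bits (X A (j : ℕ))).min' hnej :=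
      Finset.le_min' _ _ _ (fun y hy => bits_X_ge A hy)
    exact_mod_cast (by omega : (bits (X A (i : ℕ))).min' hnei < (bits (X A (j : ℕ))).min' hnej)
  · have main : ∀ U : Finset (Fin m), U.Nonempty →
        c (U.biUnion fun i => bits (X A (i : ℕ))) = v := by
      intro U hU
      set V : Finset ℕ := U.image Fin.val with hV
      have hVne : V.Nonempty := hU.image _
      have h1 : U.biUnion (fun i => bits (X A (i : ℕ))) = V.biUnion (fun j => bits (X A j)) := by
        ext x
        simp only [Finset.mem_biUnion, hV, Finset.mem_image]
        constructor
        · rintro ⟨i, hi, hx⟩; exact ⟨(i : ℕ), ⟨i, hi, rfl⟩, hx⟩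
        · rintro ⟨j, ⟨i, hi, rfl⟩, hx⟩; exact ⟨i, hi, hx⟩
      have hpair : (V : Set ℕ).PairwiseDisjoint (sets A) := by
        intro p hp q hq hpq
        have key : ∀ p q : ℕ, p < q → Disjoint (sets A p) (sets A q) := by
          intro p q h
          rw [Finset.disjoint_left]
          intro a ha ha'
          exact lt_irrefl a (sets_ordered A h a ha a ha')
        rcases lt_or_gt_of_ne hpq with h | h
        · exact key _ _ h
        · exact (key _ _ h).symm
      have h2 : ∑ j ∈ V, X A j = ∑ idx ∈ V.biUnion (sets A), A idx :=
        (Finset.sum_biUnion hpair).symm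
      have h3 : (V.biUnion (sets A)).Nonempty := by
        obtain ⟨j, hj⟩ := hVne
        obtain ⟨e, he⟩ := (sets_spec A j).1
        exact ⟨e, Finset.mem_biUnion.2 ⟨j, hj, he⟩⟩
      rw [h1, ← bits_sum, h2]
      exact hcolor _ h3
    intro U U' hU hU'
    rw [main U hU, main U' hU']

end FolkmanAux

/-- **Folkman's theorem.** -/
theorem folkman (m r : ℕ) (hm : 0 < m) (hr : 0 < r) :
    ∃ n₀ : ℕ, 0 < n₀ ∧ ∀ n : ℕ, n₀ ≤ n →
      ∀ c : Finset ℕ → Fin r,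
      ∃ F : Fin m → Finset ℕ,
        (∀ i, (F i).Nonempty) ∧
        (∀ i, F i ⊆ Finset.range n) ∧
        (∀ i j, i ≠ j → Disjoint (F i) (F j)) ∧
        (∀ i j : Fin m, i < j → (F i).min < (F j).min) ∧
        ∀ U U' : Finset (Fin m), U.Nonempty → U'.Nonempty →
          c (U.biUnion F) = c (U'.biUnion F) := by
  classical
  suffices h : ∃ n₁ : ℕ, ∀ c : Finset ℕ → Fin r,
      ∃ F : Fin m → Finset ℕ,
        (∀ i, (F i).Nonempty) ∧
        (∀ i, F i ⊆ Finset.range n₁) ∧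
        (∀ i j, i ≠ j → Disjoint (F i) (F j)) ∧
        (∀ i j : Fin m, i < j → (F i).min < (F j).min) ∧
        ∀ U U' : Finset (Fin m), U.Nonempty → U'.Nonempty →
          c (U.biUnion F) = c (U'.biUnion F) by
    obtain ⟨n₁, h⟩ := h
    refine ⟨n₁ + 1, Nat.succ_pos _, fun n hn c => ?_⟩
    obtain ⟨F, h1, h2, h3, h4, h5⟩ := h c
    exact ⟨F, h1, fun i => (h2 i).trans (Finset.range_subset_range.2 (by omega)), h3, h4, h5⟩
  set Q : ℕ → (Finset ℕ → Fin r) → Prop := fun n₁ c =>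
    ∃ F : Fin m → Finset ℕ,
      (∀ i, (F i).Nonempty) ∧
      (∀ i, F i ⊆ Finset.range n₁) ∧
      (∀ i j, i ≠ j → Disjoint (F i) (F j)) ∧
      (∀ i j : Fin m, i < j → (F i).min < (F j).min) ∧
      ∀ U U' : Finset (Fin m), U.Nonempty → U'.Nonempty →
        c (U.biUnion F) = c (U'.biUnion F) with hQ
  by_contra hcon
  have hcon' : ∀ n₁ : ℕ, ∃ c : Finset ℕ → Fin r, ¬ Q n₁ c := by
    intro n₁
    by_contra h
    push_neg at h
    refine hcon ⟨n₁, fun c => ?_⟩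
    have := h c
    simp only [hQ] at this
    exact this
  choose cs hcs using hcon'
  set U : Ultrafilter ℕ := Filter.hyperfilter ℕ with hUdef
  have hcol : ∀ S : Finset ℕ, ∃ v : Fin r, {n | cs n S = v} ∈ U := by
    intro S
    by_contra h
    push_neg at h
    have h1 : ∀ v : Fin r, {n | cs n S = v}ᶜ ∈ U :=
      fun v => Ultrafilter.compl_mem_iff_notMem.2 (h v)
    have h2 : (⋂ v : Fin r, {n | cs n S = v}ᶜ) ∈ U := Filter.iInter_mem.2 h1
    have h3 : (⋂ v : Fin r, {n | cs n S = v}ᶜ) = ∅ := by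
      ext n
      simp only [Set.mem_iInter, Set.mem_compl_iff, Set.mem_setOf_eq, Set.mem_empty_iff_false,
        iff_false, not_forall, not_not]
      exact ⟨cs n S, rfl⟩
    rw [h3] at h2
    exact (Ultrafilter.nonempty_of_mem h2).ne_empty rfl
  choose C hC using hcol
  obtain ⟨F, hF1, hF3, hF4, hF5⟩ := FolkmanAux.folkman_inf m r C
  set N : ℕ := (Finset.univ.sup fun i : Fin m => (F i).sup id) + 1 with hNdef
  have hFN : ∀ i, F i ⊆ Finset.range N := by
    intro i x hx
    have h1 : x ≤ (F i).sup id := Finset.le_sup (f := id) hx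
    have h2 : (F i).sup id ≤ Finset.univ.sup fun i : Fin m => (F i).sup id :=
      Finset.le_sup (f := fun i : Fin m => (F i).sup id) (Finset.mem_univ i)
    exact Finset.mem_range.2 (by omega)
  set T : Finset (Finset ℕ) := (Finset.univ : Finset (Fin m)).powerset.image
    (fun u => u.biUnion F) with hTdef
  have hAmem : {n | ∀ S ∈ T, cs n S = C S} ∈ U := by
    have h1 : (⋂ S ∈ (T : Set (Finset ℕ)), {n | cs n S = C S}) ∈ U :=
      (Filter.biInter_mem T.finite_toSet).2 fun S _ => hC S
    refine Filter.mem_of_superset h1 ?_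
    intro n hn S hS
    exact Set.mem_iInter₂.1 hn S (by exact_mod_cast hS)
  have hNmem : {n | N ≤ n} ∈ U := by
    apply Filter.mem_hyperfilter_of_finite_compl
    have : {n : ℕ | N ≤ n}ᶜ ⊆ Set.Iio N := by
      intro n hn
      simp only [Set.mem_compl_iff, Set.mem_setOf_eq, not_le] at hn
      exact hn
    exact (Set.finite_Iio N).subset this
  obtain ⟨n, hn1, hn2⟩ := Ultrafilter.nonempty_of_mem (Filter.inter_mem hAmem hNmem)
  apply hcs n
  simp only [hQ]
  refine ⟨F, hF1, ?_, hF3, hF4, ?_⟩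
  · intro i
    exact (hFN i).trans (Finset.range_subset_range.2 hn2)
  · intro U₁ U₂ hU₁ hU₂
    have hmemT : ∀ U₀ : Finset (Fin m), U₀.biUnion F ∈ T := by
      intro U₀
      exact Finset.mem_image.2 ⟨U₀, Finset.mem_powerset.2 (Finset.subset_univ _), rfl⟩
    have e1 : cs n (U₁.biUnion F) = C (U₁.biUnion F) := hn1 _ (hmemT U₁)
    have e2 : cs n (U₂.biUnion F) = C (U₂.biUnion F) := hn1 _ (hmemT U₂)
    rw [e1, e2, hF5 U₁ U₂ hU₁ hU₂]
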